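/- arXiv:1408.4962 — 2 statements merged into one kernel-verified Lean document; each statement's English description precedes it below -/
import Mathlib

section
/- For a stationary random field Y on Ĝ, and all N ∈ ℕ, π₁,…,π_N ∈ Ĝ, c₁,…,c_N ∈ ℂ: ∑_{m,n=1}^{N} c_m conj(c_n) C_Y(π_m ⊗ π_n*) = E(|∑_{n=1}^N c_n Y_{π_n}|²), where C_Y denotes the decomposable extension of the covariance to finite-dimensional representations. -/
open Matrix Kronecker ComplexConjugate
open scoped Classical ComplexOrder

noncomputable section

universe u

variable (G : Type u) [Group G] [TopologicalSpace G]

/-- A continuous finite-dimensional unitary representation of `G`,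
realised as a family of unitary matrices. -/
structure CRep where
  ι : Type
  [fin : Fintype ι]
  [dec : DecidableEq ι]
  ρ : G → Matrix ι ι ℂ
  map_one : ρ 1 = 1
  map_mul : ∀ g h : G, ρ (g * h) = ρ g * ρ h
  unitary : ∀ g : G, ρ g ∈ Matrix.unitaryGroup ι ℂ
  cont : Continuous ρ

namespace CRep

attribute [instance] CRep.fin CRep.dec

variable {G}

/-- The character of a representation. -/
def char (π : CRep G) (g : G) : ℂ := (π.ρ g).trace

/-- The trivial representation. -/
def trivialRep : CRep G where
  ι := Unit
  ρ := fun _ => 1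
  map_one := rfl
  map_mul := by intros; simp
  unitary := fun _ => one_mem _
  cont := continuous_const

/-- The conjugate (contragredient) representation. -/
def conjRep (π : CRep G) : CRep G where
  ι := π.ι
  ρ := fun g => (π.ρ g).map (starRingEnd ℂ)
  map_one := by
    rw [π.map_one]
    exact Matrix.map_one _ (map_zero _) (_root_.map_one _)
  map_mul := by
    intro g h
    rw [π.map_mul, Matrix.map_mul]
  unitary := by
    intro g
    have h := π.unitary g
    rw [Matrix.mem_unitaryGroup_iff] at h ⊢
    have hs : star ((π.ρ g).map (starRingEnd ℂ)) = (π.ρ g)ᵀ := by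
      ext i j
      simp [Matrix.conjTranspose_apply]
    calc (π.ρ g).map (starRingEnd ℂ) * star ((π.ρ g).map (starRingEnd ℂ))
        = (π.ρ g).map (starRingEnd ℂ) * (π.ρ g)ᵀ := by rw [hs]
      _ = (π.ρ g * star (π.ρ g)).map (starRingEnd ℂ) := by
          rw [Matrix.map_mul]
          congr 1
          ext i j
          simp [Matrix.conjTranspose_apply]
      _ = 1 := by rw [h]; exact Matrix.map_one _ (map_zero _) (_root_.map_one _)
  cont := π.cont.matrix_map Complex.continuous_conj

/-- The tensor product of two representations (Kronecker product of matrices). -/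
def tensor (π₁ π₂ : CRep G) : CRep G where
  ι := π₁.ι × π₂.ι
  ρ := fun g => π₁.ρ g ⊗ₖ π₂.ρ g
  map_one := by
    rw [π₁.map_one, π₂.map_one]; exact Matrix.one_kronecker_one
  map_mul := by
    intro g h
    rw [π₁.map_mul, π₂.map_mul, Matrix.mul_kronecker_mul]
  unitary := by
    intro g
    have h₁ := π₁.unitary g
    have h₂ := π₂.unitary g
    rw [Matrix.mem_unitaryGroup_iff] at h₁ h₂ ⊢
    have hstar : star (π₁.ρ g ⊗ₖ π₂.ρ g) = star (π₁.ρ g) ⊗ₖ star (π₂.ρ g) := by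
      ext i j
      simp [Matrix.conjTranspose_apply, Matrix.kroneckerMap_apply]
    rw [hstar, ← Matrix.mul_kronecker_mul, h₁, h₂, Matrix.one_kronecker_one]
  cont := continuous_matrix fun i j =>
    (π₁.cont.matrix_elem i.1 j.1).mul (π₂.cont.matrix_elem i.2 j.2)

/-- Irreducibility: every matrix commuting with the representation is scalar (Schur). -/
def IsIrreducible (π : CRep G) : Prop :=
  ∀ A : Matrix π.ι π.ι ℂ, (∀ g, A * π.ρ g = π.ρ g * A) →
    ∃ c : ℂ, A = c • (1 : Matrix π.ι π.ι ℂ)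

/-- (Unitary) equivalence of representations. -/
def Equiv (π₁ π₂ : CRep G) : Prop :=
  ∃ (f : Matrix π₂.ι π₁.ι ℂ) (f' : Matrix π₁.ι π₂.ι ℂ),
    (∀ g, f * π₁.ρ g = π₂.ρ g * f) ∧ f * f' = 1 ∧ f' * f = 1

end CRep

open MeasureTheory

variable [IsTopologicalGroup G] [CompactSpace G] [MeasurableSpace G] [BorelSpace G]
variable {G}

/-- The multiplicity `M(σ, π) = ∫_G χ_σ(g⁻¹) χ_π(g) dg`. -/
def mult (μ : Measure G) (σ π : CRep G) : ℂ :=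
  ∫ g, σ.char g⁻¹ * π.char g ∂μ

variable (G) in
/-- A model of the unitary dual `Ĝ`: a complete irredundant family of
irreducible unitary representations, containing the trivial representation. -/
structure UnitaryDual where
  idx : Type
  rep : idx → CRep G
  irr : ∀ i, (rep i).IsIrreducible
  complete : ∀ π : CRep G, π.IsIrreducible → ∃ i, CRep.Equiv π (rep i)
  distinct : ∀ i j, CRep.Equiv (rep i) (rep j) → i = j
  e : idx
  he : CRep.Equiv (rep e) CRep.trivialRep

/-- The covariance `E(Y_σ * conj(Y_τ))`. -/
def cov {Ω : Type*} [MeasurableSpace Ω] (P : Measure Ω)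
    (Y : CRep G → Ω → ℂ) (σ τ : CRep G) : ℂ :=
  ∫ ω, Y σ ω * (starRingEnd ℂ) (Y τ ω) ∂P

/-- Wide-sense stationarity of a random field on the unitary dual. -/
def Stationary {Ω : Type*} [MeasurableSpace Ω] (P : Measure Ω)
    (D : UnitaryDual G) (Y : CRep G → Ω → ℂ) : Prop :=
  ∀ i j : D.idx,
    cov P Y (D.rep i) (D.rep j)
      = cov P Y ((D.rep i).tensor (D.rep j).conjRep) (D.rep D.e)

/-- Decomposability of a random field over the dual. -/
def Decomposable (μ : Measure G) {Ω : Type*} [MeasurableSpace Ω] (P : Measure Ω)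
    (D : UnitaryDual G) (Y : CRep G → Ω → ℂ) : Prop :=
  ∀ σ : CRep G, ∀ᵐ ω ∂P,
    Y σ ω = ∑' i : D.idx, mult μ σ (D.rep i) * Y (D.rep i) ω

section Aux

variable {Ω : Type*} [MeasurableSpace Ω] {P : Measure Ω}

lemma aux_memL2_conj {f : Ω → ℂ} (hf : MemLp f 2 P) :
    MemLp (fun ω => (starRingEnd ℂ) (f ω)) 2 P := by
  refine ⟨Complex.continuous_conj.comp_aestronglyMeasurable hf.1, ?_⟩
  have : (fun ω => (starRingEnd ℂ) (f ω)) = conj f := rfl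
  rw [this, eLpNorm_conj]
  exact hf.2

lemma aux_integrable_mul {f g : Ω → ℂ} (hf : MemLp f 2 P) (hg : MemLp g 2 P) :
    Integrable (fun ω => f ω * g ω) P := by
  rw [← memLp_one_iff_integrable]
  have h := hg.smul (r := 1) (φ := f) hf
  exact h

lemma aux_cov_decomp (μ : Measure G) (D : UnitaryDual G) (Y : CRep G → Ω → ℂ)
    (hL2 : ∀ σ : CRep G, MemLp (Y σ) 2 P)
    (hdec : Decomposable μ P D Y)
    (hfin : ∀ σ : CRep G, {i : D.idx | mult μ σ (D.rep i) ≠ 0}.Finite)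
    (σ : CRep G) :
    (∑' i : D.idx, mult μ σ (D.rep i) * cov P Y (D.rep i) (D.rep D.e))
      = cov P Y σ (D.rep D.e) := by
  classical
  set s : Finset D.idx := (hfin σ).toFinset with hs
  have hmem : ∀ i, i ∈ s ↔ mult μ σ (D.rep i) ≠ 0 := by
    intro i; simp [hs, Set.Finite.mem_toFinset]
  have htsum : (∑' i : D.idx, mult μ σ (D.rep i) * cov P Y (D.rep i) (D.rep D.e))
      = ∑ i ∈ s, mult μ σ (D.rep i) * cov P Y (D.rep i) (D.rep D.e) := by
    refine tsum_eq_sum ?_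
    intro i hi
    have : mult μ σ (D.rep i) = 0 := by
      by_contra h; exact hi ((hmem i).mpr h)
    simp [this]
  rw [htsum]
  have hae : ∀ᵐ ω ∂P,
      Y σ ω = ∑ i ∈ s, mult μ σ (D.rep i) * Y (D.rep i) ω := by
    filter_upwards [hdec σ] with ω hω
    rw [hω]
    refine tsum_eq_sum ?_
    intro i hi
    have : mult μ σ (D.rep i) = 0 := by
      by_contra h; exact hi ((hmem i).mpr h)
    simp [this]
  have hint : ∀ i ∈ s, Integrable
      (fun ω => mult μ σ (D.rep i) * (Y (D.rep i) ω * (starRingEnd ℂ) (Y (D.rep D.e) ω))) P :=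
    fun i _ => (aux_integrable_mul (hL2 (D.rep i)) (aux_memL2_conj (hL2 (D.rep D.e)))).const_mul _
  calc ∑ i ∈ s, mult μ σ (D.rep i) * cov P Y (D.rep i) (D.rep D.e)
      = ∑ i ∈ s, ∫ ω, mult μ σ (D.rep i) *
          (Y (D.rep i) ω * (starRingEnd ℂ) (Y (D.rep D.e) ω)) ∂P := by
        refine Finset.sum_congr rfl fun i _ => ?_
        rw [cov, MeasureTheory.integral_const_mul]
    _ = ∫ ω, ∑ i ∈ s, mult μ σ (D.rep i) *
          (Y (D.rep i) ω * (starRingEnd ℂ) (Y (D.rep D.e) ω)) ∂P :=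
        (MeasureTheory.integral_finset_sum s hint).symm
    _ = cov P Y σ (D.rep D.e) := by
        rw [cov]
        refine MeasureTheory.integral_congr_ae ?_
        filter_upwards [hae] with ω hω
        rw [hω, Finset.sum_mul]
        refine Finset.sum_congr rfl fun i _ => ?_
        ring

end Aux

/-- `∑ c_m conj(c_n) C_Y(π_m ⊗ π_n*) = E(|∑ c_n Y_(π_n)|²)` for a stationary field,
where `C_Y` is extended decomposably to finite-dimensional representations. -/
theorem stmt4 (μ : Measure G) [μ.IsHaarMeasure] [IsProbabilityMeasure μ]
    (D : UnitaryDual G) {Ω : Type*} [MeasurableSpace Ω] (P : Measure Ω)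
    [IsProbabilityMeasure P] (Y : CRep G → Ω → ℂ)
    (hL2 : ∀ σ : CRep G, MemLp (Y σ) 2 P)
    (hdec : Decomposable μ P D Y) (hstat : Stationary P D Y)
    (hfin : ∀ σ : CRep G, {i : D.idx | mult μ σ (D.rep i) ≠ 0}.Finite)
    (N : ℕ) (π : Fin N → D.idx) (c : Fin N → ℂ) :
    ∑ m : Fin N, ∑ n : Fin N, c m * (starRingEnd ℂ) (c n) *
        (∑' i : D.idx, mult μ ((D.rep (π m)).tensor (D.rep (π n)).conjRep) (D.rep i) *
          cov P Y (D.rep i) (D.rep D.e))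
      = ((∫ ω, ‖∑ n : Fin N, c n * Y (D.rep (π n)) ω‖ ^ 2 ∂P : ℝ) : ℂ) := by
  classical
  -- Step 1: the inner tsum is the covariance of the tensor representation
  have h1 : ∀ m n : Fin N,
      (∑' i : D.idx, mult μ ((D.rep (π m)).tensor (D.rep (π n)).conjRep) (D.rep i) *
          cov P Y (D.rep i) (D.rep D.e))
        = cov P Y (D.rep (π m)) (D.rep (π n)) := by
    intro m n
    rw [aux_cov_decomp μ D Y hL2 hdec hfin]
    exact (hstat (π m) (π n)).symm
  simp only [h1]
  -- Step 2: rewrite the RHS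
  have habs : ∀ ω, ((‖∑ n : Fin N, c n * Y (D.rep (π n)) ω‖ ^ 2 : ℝ) : ℂ)
      = (∑ m : Fin N, c m * Y (D.rep (π m)) ω) *
        (starRingEnd ℂ) (∑ n : Fin N, c n * Y (D.rep (π n)) ω) := by
    intro ω
    rw [Complex.mul_conj, Complex.sq_norm]
  have hS : MemLp (fun ω => ∑ n : Fin N, c n * Y (D.rep (π n)) ω) 2 P := by
    refine memLp_finset_sum _ fun n _ => ?_
    exact (hL2 (D.rep (π n))).const_mul (c n)
  have hSint : Integrable (fun ω => ‖∑ n : Fin N, c n * Y (D.rep (π n)) ω‖ ^ 2) P := by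
    have h := hS.norm.integrable_sq
    simpa using h
  have hRHS : ((∫ ω, ‖∑ n : Fin N, c n * Y (D.rep (π n)) ω‖ ^ 2 ∂P : ℝ) : ℂ)
      = ∫ ω, (∑ m : Fin N, c m * Y (D.rep (π m)) ω) *
          (starRingEnd ℂ) (∑ n : Fin N, c n * Y (D.rep (π n)) ω) ∂P := by
    have hcomm := Complex.ofRealCLM.integral_comp_comm hSint
    simp only [Complex.ofRealCLM_apply] at hcomm
    rw [← hcomm]
    exact MeasureTheory.integral_congr_ae (Filter.Eventually.of_forall fun ω => habs ω)
  rw [hRHS]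
  -- Step 3: expand the square
  have hint : ∀ (m n : Fin N), Integrable
      (fun ω => c m * Y (D.rep (π m)) ω *
        ((starRingEnd ℂ) (c n) * (starRingEnd ℂ) (Y (D.rep (π n)) ω))) P := by
    intro m n
    have h := aux_integrable_mul (hL2 (D.rep (π m))) (aux_memL2_conj (hL2 (D.rep (π n))))
    have h2 := (h.const_mul (c m * (starRingEnd ℂ) (c n)))
    refine h2.congr (Filter.Eventually.of_forall fun ω => ?_)
    ring
  have hexp : ∀ ω, (∑ m : Fin N, c m * Y (D.rep (π m)) ω) *
        (starRingEnd ℂ) (∑ n : Fin N, c n * Y (D.rep (π n)) ω)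
      = ∑ m : Fin N, ∑ n : Fin N, c m * Y (D.rep (π m)) ω *
          ((starRingEnd ℂ) (c n) * (starRingEnd ℂ) (Y (D.rep (π n)) ω)) := by
    intro ω
    rw [map_sum, Finset.sum_mul_sum]
    refine Finset.sum_congr rfl fun m _ => Finset.sum_congr rfl fun n _ => ?_
    rw [RingHom.map_mul]
  calc ∑ m : Fin N, ∑ n : Fin N, c m * (starRingEnd ℂ) (c n) *
        cov P Y (D.rep (π m)) (D.rep (π n))
      = ∑ m : Fin N, ∑ n : Fin N, ∫ ω, c m * Y (D.rep (π m)) ω *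
          ((starRingEnd ℂ) (c n) * (starRingEnd ℂ) (Y (D.rep (π n)) ω)) ∂P := by
        refine Finset.sum_congr rfl fun m _ => Finset.sum_congr rfl fun n _ => ?_
        rw [cov, ← MeasureTheory.integral_const_mul]
        refine MeasureTheory.integral_congr_ae (Filter.Eventually.of_forall fun ω => ?_)
        ring
    _ = ∑ m : Fin N, ∫ ω, ∑ n : Fin N, c m * Y (D.rep (π m)) ω *
          ((starRingEnd ℂ) (c n) * (starRingEnd ℂ) (Y (D.rep (π n)) ω)) ∂P :=
        Finset.sum_congr rfl fun m _ =>
          (MeasureTheory.integral_finset_sum _ fun n _ => hint m n).symm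
    _ = ∫ ω, ∑ m : Fin N, ∑ n : Fin N, c m * Y (D.rep (π m)) ω *
          ((starRingEnd ℂ) (c n) * (starRingEnd ℂ) (Y (D.rep (π n)) ω)) ∂P :=
        (MeasureTheory.integral_finset_sum _ fun m _ =>
          MeasureTheory.integrable_finset_sum _ fun n _ => hint m n).symm
    _ = ∫ ω, (∑ m : Fin N, c m * Y (D.rep (π m)) ω) *
          (starRingEnd ℂ) (∑ n : Fin N, c n * Y (D.rep (π n)) ω) ∂P := by
        refine MeasureTheory.integral_congr_ae (Filter.Eventually.of_forall fun ω => ?_)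
        exact (hexp ω).symm
end
end

section
/- A stationary random field on the unitary dual Ĝ of a compact group is stationary in the hypergroup sense: for all π₁, π₂ ∈ Ĝ, C(π₁, π₂) = ∑_{π ∈ Ĝ} M(π₁ ⊗ π₂*, π) · C(π, ε), where C(a,b) = E(Y_a conj(Y_b)). -/
open Matrix Kronecker ComplexConjugate
open scoped Classical ComplexOrder

noncomputable section

universe u

variable (G : Type u) [Group G] [TopologicalSpace G]

open MeasureTheory

variable [IsTopologicalGroup G] [CompactSpace G] [MeasurableSpace G] [BorelSpace G]
variable {G}

lemma integrable_mul_conj {Ω : Type*} [MeasurableSpace Ω] (P : Measure Ω)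
    {f g : Ω → ℂ} (hf : MemLp f 2 P) (hg : MemLp g 2 P) :
    Integrable (fun ω => f ω * (starRingEnd ℂ) (g ω)) P := by
  have h := MeasureTheory.L2.integrable_inner (𝕜 := ℂ) (hg.toLp g) (hf.toLp f)
  refine h.congr ?_
  filter_upwards [hf.coeFn_toLp, hg.coeFn_toLp] with ω h1 h2
  simp only [RCLike.inner_apply, h1, h2]

/-- A stationary random field on `Ĝ` is stationary in the hypergroup sense:
`C(π₁,π₂) = ∑_π M(π₁⊗π₂*, π) C(π, ε)`. -/
theorem stmt15 (μ : Measure G) [μ.IsHaarMeasure] [IsProbabilityMeasure μ]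
    (D : UnitaryDual G) {Ω : Type*} [MeasurableSpace Ω] (P : Measure Ω)
    [IsProbabilityMeasure P] (Y : CRep G → Ω → ℂ)
    (hL2 : ∀ σ : CRep G, MemLp (Y σ) 2 P)
    (hdec : Decomposable μ P D Y) (hstat : Stationary P D Y)
    (hfin : ∀ σ : CRep G, {i : D.idx | mult μ σ (D.rep i) ≠ 0}.Finite) :
    ∀ i j : D.idx, cov P Y (D.rep i) (D.rep j)
      = ∑' k : D.idx, mult μ ((D.rep i).tensor (D.rep j).conjRep) (D.rep k) *
          cov P Y (D.rep k) (D.rep D.e) := by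
  intro i j
  set σ := (D.rep i).tensor (D.rep j).conjRep with hσ
  set s := (hfin σ).toFinset with hsdef
  have hzero : ∀ k ∉ s, mult μ σ (D.rep k) = 0 := by
    intro k hk
    by_contra h
    exact hk ((hfin σ).mem_toFinset.mpr h)
  have hint : ∀ k : D.idx,
      Integrable (fun ω => Y (D.rep k) ω * (starRingEnd ℂ) (Y (D.rep D.e) ω)) P :=
    fun k => integrable_mul_conj P (hL2 _) (hL2 _)
  have hae : ∀ᵐ ω ∂P, Y σ ω * (starRingEnd ℂ) (Y (D.rep D.e) ω)
      = ∑ k ∈ s, mult μ σ (D.rep k) *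
          (Y (D.rep k) ω * (starRingEnd ℂ) (Y (D.rep D.e) ω)) := by
    filter_upwards [hdec σ] with ω hω
    rw [hω, tsum_eq_sum (s := s) (fun k hk => by rw [hzero k hk, zero_mul]),
      Finset.sum_mul]
    exact Finset.sum_congr rfl fun k _ => (mul_assoc _ _ _)
  have key : cov P Y σ (D.rep D.e)
      = ∑ k ∈ s, mult μ σ (D.rep k) * cov P Y (D.rep k) (D.rep D.e) := by
    unfold cov
    rw [integral_congr_ae hae,
      integral_finset_sum _ (fun k _ => (hint k).const_mul _)]
    exact Finset.sum_congr rfl fun k _ => MeasureTheory.integral_const_mul _ _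
  rw [hstat i j, key,
    tsum_eq_sum (s := s) (fun k hk => by rw [hzero k hk, zero_mul])]
end
end
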